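/- Let k be a field, let R and S be polynomial rings over k in at least one variable each, with graded maximal ideals m and n, let I ⊆ m² and J ⊆ n² be proper homogeneous ideals, let T = R ⊗_k S, and let F = I + J + mn ⊆ T. Then Min_T(T/F) ⊆ {p₁T + nT : p₁ ∈ Min_R(R/I)} ∪ {p₂T + mT : p₂ ∈ Min_S(S/J)}, and equality holds if both dim(R/I) > 0 and dim(S/J) > 0. -/

import Mathlib

/- STATEMENT 9: k a field, R and S polynomial rings over k in at least one variable each
with graded maximal ideals m and n, I ⊆ m² and J ⊆ n² proper homogeneous ideals,
T = R ⊗_k S, F = I + J + mn. Then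
Min_T(T/F) ⊆ {p₁T + nT : p₁ ∈ Min_R(R/I)} ∪ {p₂T + mT : p₂ ∈ Min_S(S/J)},
with equality if both dim(R/I) > 0 and dim(S/J) > 0. -/

open MvPolynomial

noncomputable section

/-- The graded maximal ideal of a polynomial ring, generated by the variables. -/
def mxI (k : Type*) [Field k] (σ : Type*) : Ideal (MvPolynomial σ k) :=
  Ideal.span (Set.range MvPolynomial.X)

/-- An ideal of a polynomial ring is homogeneous if it contains every homogeneous
component of each of its elements. -/
def IsHomogIdeal {k : Type*} [Field k] {σ : Type*} (I : Ideal (MvPolynomial σ k)) : Prop :=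
  ∀ f ∈ I, ∀ d : ℕ, MvPolynomial.homogeneousComponent d f ∈ I

namespace FPAux

/-! ### Generic lemmas about minimal primes and retractions -/

section Generic

variable {T R : Type*} [CommRing T] [CommRing R]

theorem side_subset (φ : T →+* R) (hsurj : Function.Surjective φ) (N : Ideal T) (ρ : R →+* T)
    (hcomap : ∀ p : Ideal R, Ideal.comap φ p = Ideal.map ρ p ⊔ N)
    (I : Ideal R) (F P : Ideal T)
    (hFI : F ≤ Ideal.comap φ I) (hIF : Ideal.map ρ I ≤ F)
    (hP : P ∈ F.minimalPrimes) (hNP : N ≤ P) :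
    ∃ p ∈ I.minimalPrimes, Ideal.map ρ p ⊔ N = P := by
  have h1 : Ideal.comap φ I ≤ P := by
    rw [hcomap]; exact sup_le (hIF.trans hP.1.2) hNP
  have hPmin : P ∈ (Ideal.comap φ I).minimalPrimes :=
    ⟨⟨hP.1.1, h1⟩, fun Q hQ hQP => hP.2 ⟨hQ.1, hFI.trans hQ.2⟩ hQP⟩
  rw [Ideal.comap_minimalPrimes_eq_of_surjective hsurj] at hPmin
  obtain ⟨p, hp, rfl⟩ := hPmin
  exact ⟨p, hp, (hcomap p).symm⟩

theorem side_mem (φ : T →+* R) (hsurj : Function.Surjective φ) (N : Ideal T)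
    (hker : RingHom.ker φ = N) (ρ : R →+* T)
    (hcomap : ∀ p : Ideal R, Ideal.comap φ p = Ideal.map ρ p ⊔ N)
    (I p : Ideal R) (F : Ideal T)
    (hFI : F ≤ Ideal.comap φ I) (hIF : Ideal.map ρ I ≤ F)
    (hp : p ∈ I.minimalPrimes)
    (hsplit : ∀ Q : Ideal T, Q.IsPrime → F ≤ Q → Q ≤ Ideal.comap φ p → N ≤ Q) :
    Ideal.comap φ p ∈ F.minimalPrimes := by
  haveI hpp : p.IsPrime := hp.1.1
  have hFp : F ≤ Ideal.comap φ p := hFI.trans (Ideal.comap_mono hp.1.2)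
  refine ⟨⟨Ideal.IsPrime.comap φ, hFp⟩, ?_⟩
  rintro Q ⟨hQp, hFQ⟩ hQle
  have hNQ : N ≤ Q := hsplit Q hQp hFQ hQle
  have hkerQ : RingHom.ker φ ≤ Q := hker ▸ hNQ
  have hqprime := Ideal.map_isPrime_of_surjective hsurj hkerQ (I := Q)
  have hIq : I ≤ Ideal.map φ Q := by
    have h2 : Ideal.comap φ I ≤ Q := by
      rw [hcomap]; exact sup_le (hIF.trans hFQ) hNQ
    have h3 := Ideal.map_mono (f := φ) h2
    rwa [Ideal.map_comap_of_surjective φ hsurj] at h3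
  have hqp : Ideal.map φ Q ≤ p := Ideal.map_le_of_le_comap hQle
  have hple := hp.2 ⟨hqprime, hIq⟩ hqp
  calc Ideal.comap φ p ≤ Ideal.comap φ (Ideal.map φ Q) := Ideal.comap_mono hple
    _ = Q ⊔ Ideal.comap φ ⊥ := Ideal.comap_map_of_surjective φ hsurj Q
    _ ≤ Q := sup_le le_rfl (by rw [← RingHom.ker_eq_comap_bot, hker]; exact hNQ)

end Generic


variable (k : Type*) [Field k] (σ τ : Type*)

/-- projection to the left factor, killing the right variables -/
def pL : MvPolynomial (σ ⊕ τ) k →+* MvPolynomial σ k :=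
  (aeval (Sum.elim X 0) : MvPolynomial (σ ⊕ τ) k →ₐ[k] MvPolynomial σ k).toRingHom

def rL : MvPolynomial σ k →+* MvPolynomial (σ ⊕ τ) k :=
  (rename (Sum.inl : σ → σ ⊕ τ) :
    MvPolynomial σ k →ₐ[k] MvPolynomial (σ ⊕ τ) k).toRingHom

def pR : MvPolynomial (σ ⊕ τ) k →+* MvPolynomial τ k :=
  (aeval (Sum.elim 0 X) : MvPolynomial (σ ⊕ τ) k →ₐ[k] MvPolynomial τ k).toRingHom

def rR : MvPolynomial τ k →+* MvPolynomial (σ ⊕ τ) k :=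
  (rename (Sum.inr : τ → σ ⊕ τ) :
    MvPolynomial τ k →ₐ[k] MvPolynomial (σ ⊕ τ) k).toRingHom

def mT : Ideal (MvPolynomial (σ ⊕ τ) k) := Ideal.map (rL k σ τ) (mxI k σ)

def nT : Ideal (MvPolynomial (σ ⊕ τ) k) := Ideal.map (rR k σ τ) (mxI k τ)

theorem nT_eq_span :
    nT k σ τ = Ideal.span (Set.range fun j : τ => (X (Sum.inr j) : MvPolynomial (σ ⊕ τ) k)) := by
  have hfun : ⇑(rR k σ τ) ∘ (X : τ → MvPolynomial τ k)
      = fun j : τ => (X (Sum.inr j) : MvPolynomial (σ ⊕ τ) k) := by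
    funext j; exact rename_X _ _
  rw [nT, mxI, Ideal.map_span, ← Set.range_comp, hfun]

theorem mT_eq_span :
    mT k σ τ = Ideal.span (Set.range fun i : σ => (X (Sum.inl i) : MvPolynomial (σ ⊕ τ) k)) := by
  have hfun : ⇑(rL k σ τ) ∘ (X : σ → MvPolynomial σ k)
      = fun i : σ => (X (Sum.inl i) : MvPolynomial (σ ⊕ τ) k) := by
    funext i; exact rename_X _ _
  rw [mT, mxI, Ideal.map_span, ← Set.range_comp, hfun]

theorem X_inr_mem_nT (j : τ) : (X (Sum.inr j) : MvPolynomial (σ ⊕ τ) k) ∈ nT k σ τ := by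
  rw [nT_eq_span]; exact Ideal.subset_span ⟨j, rfl⟩

theorem X_inl_mem_mT (i : σ) : (X (Sum.inl i) : MvPolynomial (σ ⊕ τ) k) ∈ mT k σ τ := by
  rw [mT_eq_span]; exact Ideal.subset_span ⟨i, rfl⟩

theorem quot_pL : (Ideal.Quotient.mk (nT k σ τ)).comp ((rL k σ τ).comp (pL k σ τ))
    = Ideal.Quotient.mk (nT k σ τ) := by
  apply MvPolynomial.ringHom_ext
  · intro a; simp [pL, rL]
  · rintro (i | j)
    · simp [pL, rL]
    · simp only [RingHom.comp_apply]
      rw [show pL k σ τ (X (Sum.inr j)) = 0 by simp [pL], map_zero, map_zero]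
      symm
      rw [Ideal.Quotient.eq_zero_iff_mem]
      exact X_inr_mem_nT k σ τ j

theorem quot_pR : (Ideal.Quotient.mk (mT k σ τ)).comp ((rR k σ τ).comp (pR k σ τ))
    = Ideal.Quotient.mk (mT k σ τ) := by
  apply MvPolynomial.ringHom_ext
  · intro a; simp [pR, rR]
  · rintro (i | j)
    · simp only [RingHom.comp_apply]
      rw [show pR k σ τ (X (Sum.inl i)) = 0 by simp [pR], map_zero, map_zero]
      symm
      rw [Ideal.Quotient.eq_zero_iff_mem]
      exact X_inl_mem_mT k σ τ i
    · simp [pR, rR]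

theorem sub_mem_nT (g : MvPolynomial (σ ⊕ τ) k) :
    g - rL k σ τ (pL k σ τ g) ∈ nT k σ τ := by
  have h := congrArg (fun f => f g) (quot_pL k σ τ)
  simp only [RingHom.comp_apply] at h
  exact Ideal.Quotient.eq.mp h.symm

theorem sub_mem_mT (g : MvPolynomial (σ ⊕ τ) k) :
    g - rR k σ τ (pR k σ τ g) ∈ mT k σ τ := by
  have h := congrArg (fun f => f g) (quot_pR k σ τ)
  simp only [RingHom.comp_apply] at h
  exact Ideal.Quotient.eq.mp h.symm

theorem ker_pL : RingHom.ker (pL k σ τ) = nT k σ τ := by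
  apply le_antisymm
  · intro g hg
    rw [RingHom.mem_ker] at hg
    have h := sub_mem_nT k σ τ g
    rwa [hg, map_zero, sub_zero] at h
  · rw [nT_eq_span, Ideal.span_le]
    rintro x ⟨j, rfl⟩
    simp [SetLike.mem_coe, RingHom.mem_ker, pL]

theorem ker_pR : RingHom.ker (pR k σ τ) = mT k σ τ := by
  apply le_antisymm
  · intro g hg
    rw [RingHom.mem_ker] at hg
    have h := sub_mem_mT k σ τ g
    rwa [hg, map_zero, sub_zero] at h
  · rw [mT_eq_span, Ideal.span_le]
    rintro x ⟨i, rfl⟩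
    simp [SetLike.mem_coe, RingHom.mem_ker, pR]

theorem comp_pL : (pL k σ τ).comp (rL k σ τ) = RingHom.id _ := by
  apply MvPolynomial.ringHom_ext <;> intros <;> simp [pL, rL]

theorem comp_pR : (pR k σ τ).comp (rR k σ τ) = RingHom.id _ := by
  apply MvPolynomial.ringHom_ext <;> intros <;> simp [pR, rR]

theorem surj_pL : Function.Surjective (pL k σ τ) := fun f =>
  ⟨rL k σ τ f, by rw [← RingHom.comp_apply, comp_pL]; rfl⟩

theorem surj_pR : Function.Surjective (pR k σ τ) := fun f =>
  ⟨rR k σ τ f, by rw [← RingHom.comp_apply, comp_pR]; rfl⟩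

theorem comap_pL (p : Ideal (MvPolynomial σ k)) :
    Ideal.comap (pL k σ τ) p = Ideal.map (rL k σ τ) p ⊔ nT k σ τ := by
  apply le_antisymm
  · intro g hg
    have hrepr : g = rL k σ τ (pL k σ τ g) + (g - rL k σ τ (pL k σ τ g)) := by ring
    rw [hrepr]
    exact Submodule.add_mem_sup (Ideal.mem_map_of_mem _ hg) (sub_mem_nT k σ τ g)
  · refine sup_le ?_ ?_
    · rw [Ideal.map_le_iff_le_comap]
      intro x hx
      show (pL k σ τ) ((rL k σ τ) x) ∈ p
      rw [← RingHom.comp_apply, comp_pL]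
      exact hx
    · rw [← ker_pL]
      intro x hx
      rw [RingHom.mem_ker] at hx
      show (pL k σ τ) x ∈ p
      rw [hx]; exact p.zero_mem

theorem comap_pR (p : Ideal (MvPolynomial τ k)) :
    Ideal.comap (pR k σ τ) p = Ideal.map (rR k σ τ) p ⊔ mT k σ τ := by
  apply le_antisymm
  · intro g hg
    have hrepr : g = rR k σ τ (pR k σ τ g) + (g - rR k σ τ (pR k σ τ g)) := by ring
    rw [hrepr]
    exact Submodule.add_mem_sup (Ideal.mem_map_of_mem _ hg) (sub_mem_mT k σ τ g)
  · refine sup_le ?_ ?_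
    · rw [Ideal.map_le_iff_le_comap]
      intro x hx
      show (pR k σ τ) ((rR k σ τ) x) ∈ p
      rw [← RingHom.comp_apply, comp_pR]
      exact hx
    · rw [← ker_pR]
      intro x hx
      rw [RingHom.mem_ker] at hx
      show (pR k σ τ) x ∈ p
      rw [hx]; exact p.zero_mem

theorem comap_rL_pL (p : Ideal (MvPolynomial σ k)) :
    Ideal.comap (rL k σ τ) (Ideal.comap (pL k σ τ) p) = p := by
  rw [Ideal.comap_comap, comp_pL, Ideal.comap_id]

theorem comap_rR_pR (p : Ideal (MvPolynomial τ k)) :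
    Ideal.comap (rR k σ τ) (Ideal.comap (pR k σ τ) p) = p := by
  rw [Ideal.comap_comap, comp_pR, Ideal.comap_id]


variable {k : Type*} [Field k] {σ τ : Type*}

/-! ### The graded maximal ideal as kernel of constantCoeff -/

theorem mxI_eq_ker :
    mxI k σ = RingHom.ker (constantCoeff : MvPolynomial σ k →+* k) := by
  have key : ((Ideal.Quotient.mk (mxI k σ)).comp
        ((C : k →+* MvPolynomial σ k).comp constantCoeff))
      = Ideal.Quotient.mk (mxI k σ) := by
    apply MvPolynomial.ringHom_ext
    · intro a; simp
    · intro i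
      simp only [RingHom.comp_apply, constantCoeff_X, map_zero]
      symm
      rw [Ideal.Quotient.eq_zero_iff_mem]
      exact Ideal.subset_span ⟨i, rfl⟩
  apply le_antisymm
  · rw [mxI, Ideal.span_le]
    rintro x ⟨i, rfl⟩
    simp [RingHom.mem_ker]
  · intro f hf
    rw [RingHom.mem_ker] at hf
    have := congrArg (fun g => g f) key
    simp only [RingHom.comp_apply, hf, map_zero] at this
    have : Ideal.Quotient.mk (mxI k σ) f = 0 := this.symm
    rwa [Ideal.Quotient.eq_zero_iff_mem] at this

theorem mem_mxI_iff {f : MvPolynomial σ k} : f ∈ mxI k σ ↔ constantCoeff f = 0 := by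
  rw [mxI_eq_ker, RingHom.mem_ker]

/-- An ideal strictly above `mxI` would be everything. -/
theorem eq_mxI_of_le (q : Ideal (MvPolynomial σ k)) (h1 : mxI k σ ≤ q) (h2 : q ≠ ⊤) :
    q = mxI k σ := by
  refine le_antisymm (fun f hf => ?_) h1
  rw [mem_mxI_iff]
  by_contra hc
  apply h2
  have hmem : f - C (constantCoeff f) ∈ mxI k σ := by
    rw [mem_mxI_iff]; simp
  have : C (constantCoeff f) ∈ q := by
    have := q.sub_mem hf (h1 hmem)
    simpa using this
  exact Ideal.eq_top_of_isUnit_mem q this ((isUnit_iff_ne_zero.mpr hc).map C)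

/-- A proper homogeneous ideal is contained in `mxI`. -/
theorem homog_le_mxI (q : Ideal (MvPolynomial σ k)) (h : IsHomogIdeal q) (hq : q ≠ ⊤) :
    q ≤ mxI k σ := by
  intro f hf
  rw [mem_mxI_iff]
  by_contra hc
  apply hq
  have h0 : homogeneousComponent 0 f ∈ q := h f hf 0
  rw [homogeneousComponent_zero] at h0
  exact Ideal.eq_top_of_isUnit_mem q h0 ((isUnit_iff_ne_zero.mpr hc).map C)

/-! ### Homogeneity of minimal primes -/

attribute [local instance] MvPolynomial.gradedAlgebra

theorem isHomogIdeal_iff (I : Ideal (MvPolynomial σ k)) :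
    IsHomogIdeal I ↔ I.IsHomogeneous (homogeneousSubmodule σ k) := by
  have key : ∀ (r : MvPolynomial σ k) (i : ℕ),
      (DirectSum.decompose (homogeneousSubmodule σ k) r i : MvPolynomial σ k)
        = homogeneousComponent i r := by
    intro r i
    rw [← DirectSum.Decomposition.decompose'_eq]
    exact MvPolynomial.decomposition.decompose'_apply r i
  constructor
  · intro h i r hr
    rw [key]; exact h r hr i
  · intro h f hf d
    have := h d hf
    rwa [key] at this

theorem isHomogIdeal_of_minimal {I p : Ideal (MvPolynomial σ k)} (hI : IsHomogIdeal I)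
    (hp : p ∈ I.minimalPrimes) : IsHomogIdeal p := by
  rw [isHomogIdeal_iff] at hI ⊢
  have hpprime : p.IsPrime := hp.1.1
  have hcore : (p.homogeneousCore (homogeneousSubmodule σ k)).toIdeal.IsPrime :=
    hpprime.homogeneousCore
  have hcle : (p.homogeneousCore (homogeneousSubmodule σ k)).toIdeal ≤ p :=
    Ideal.toIdeal_homogeneousCore_le _ p
  have hIle : I ≤ (p.homogeneousCore (homogeneousSubmodule σ k)).toIdeal := by
    conv_lhs => rw [← hI.toIdeal_homogeneousCore_eq_self]
    exact Ideal.homogeneousCore_mono _ hp.1.2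
  have := hp.2 ⟨hcore, hIle⟩ hcle
  have heq : (p.homogeneousCore (homogeneousSubmodule σ k)).toIdeal = p :=
    le_antisymm hcle this
  rw [← heq]
  exact (p.homogeneousCore (homogeneousSubmodule σ k)).isHomogeneous

/-- If `mxI` is a minimal prime of a homogeneous ideal `I`, then `R/I` has dimension `≤ 0`. -/
theorem dim_le_zero_of_mxI_minimal {I : Ideal (MvPolynomial σ k)} (hI : IsHomogIdeal I)
    (hm : mxI k σ ∈ I.minimalPrimes) :
    ringKrullDim (MvPolynomial σ k ⧸ I) ≤ 0 := by
  have key : ∀ q : Ideal (MvPolynomial σ k), q.IsPrime → I ≤ q → q = mxI k σ := by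
    intro q hq hIq
    obtain ⟨p, hp, hpq⟩ := Ideal.exists_minimalPrimes_le hIq
    have hphom : IsHomogIdeal p := isHomogIdeal_of_minimal hI hp
    have hple : p ≤ mxI k σ := homog_le_mxI p hphom hp.1.1.ne_top
    have hmp : mxI k σ ≤ p := hm.2 ⟨hp.1.1, hp.1.2⟩ hple
    exact eq_mxI_of_le q (hmp.trans hpq) hq.ne_top
  have hsub : Subsingleton (PrimeSpectrum (MvPolynomial σ k ⧸ I)) := by
    constructor
    intro P Q
    have hP : (P.asIdeal.comap (Ideal.Quotient.mk I)) = mxI k σ := by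
      refine key _ (Ideal.IsPrime.comap _) fun x hx => ?_
      show Ideal.Quotient.mk I x ∈ P.asIdeal
      rw [Ideal.Quotient.eq_zero_iff_mem.mpr hx]; exact zero_mem _
    have hQ : (Q.asIdeal.comap (Ideal.Quotient.mk I)) = mxI k σ := by
      refine key _ (Ideal.IsPrime.comap _) fun x hx => ?_
      show Ideal.Quotient.mk I x ∈ Q.asIdeal
      rw [Ideal.Quotient.eq_zero_iff_mem.mpr hx]; exact zero_mem _
    ext1
    rw [← Ideal.map_comap_of_surjective _ Ideal.Quotient.mk_surjective P.asIdeal,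
      ← Ideal.map_comap_of_surjective _ Ideal.Quotient.mk_surjective Q.asIdeal, hP, hQ]
  exact Order.krullDim_nonpos_of_subsingleton


end FPAux

theorem minimalPrimes_fiberProduct
    (k : Type*) [Field k] (a b : ℕ) (ha : 0 < a) (hb : 0 < b)
    (I : Ideal (MvPolynomial (Fin a) k)) (hIm : I ≤ mxI k (Fin a) ^ 2)
    (hIproper : I ≠ ⊤) (hIhom : IsHomogIdeal I)
    (J : Ideal (MvPolynomial (Fin b) k)) (hJn : J ≤ mxI k (Fin b) ^ 2)
    (hJproper : J ≠ ⊤) (hJhom : IsHomogIdeal J)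
    (I' J' m' n' : Ideal (MvPolynomial (Fin a ⊕ Fin b) k))
    (hI' : I' = Ideal.map (rename (Sum.inl : Fin a → Fin a ⊕ Fin b) :
      MvPolynomial (Fin a) k →ₐ[k] MvPolynomial (Fin a ⊕ Fin b) k) I)
    (hJ' : J' = Ideal.map (rename (Sum.inr : Fin b → Fin a ⊕ Fin b) :
      MvPolynomial (Fin b) k →ₐ[k] MvPolynomial (Fin a ⊕ Fin b) k) J)
    (hm' : m' = Ideal.map (rename (Sum.inl : Fin a → Fin a ⊕ Fin b) :
      MvPolynomial (Fin a) k →ₐ[k] MvPolynomial (Fin a ⊕ Fin b) k) (mxI k (Fin a)))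
    (hn' : n' = Ideal.map (rename (Sum.inr : Fin b → Fin a ⊕ Fin b) :
      MvPolynomial (Fin b) k →ₐ[k] MvPolynomial (Fin a ⊕ Fin b) k) (mxI k (Fin b)))
    (F : Ideal (MvPolynomial (Fin a ⊕ Fin b) k)) (hF : F = I' + J' + m' * n') :
    F.minimalPrimes ⊆
      ((fun p => Ideal.map (rename (Sum.inl : Fin a → Fin a ⊕ Fin b) :
          MvPolynomial (Fin a) k →ₐ[k] MvPolynomial (Fin a ⊕ Fin b) k) p + n') ''
        I.minimalPrimes) ∪
      ((fun q => Ideal.map (rename (Sum.inr : Fin b → Fin a ⊕ Fin b) :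
          MvPolynomial (Fin b) k →ₐ[k] MvPolynomial (Fin a ⊕ Fin b) k) q + m') ''
        J.minimalPrimes) ∧
    (0 < ringKrullDim (MvPolynomial (Fin a) k ⧸ I) →
     0 < ringKrullDim (MvPolynomial (Fin b) k ⧸ J) →
      F.minimalPrimes =
        ((fun p => Ideal.map (rename (Sum.inl : Fin a → Fin a ⊕ Fin b) :
            MvPolynomial (Fin a) k →ₐ[k] MvPolynomial (Fin a ⊕ Fin b) k) p + n') ''
          I.minimalPrimes) ∪
        ((fun q => Ideal.map (rename (Sum.inr : Fin b → Fin a ⊕ Fin b) :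
            MvPolynomial (Fin b) k →ₐ[k] MvPolynomial (Fin a ⊕ Fin b) k) q + m') ''
          J.minimalPrimes)) := by
  classical
  -- Notation
  have hm'T : m' = FPAux.mT k (Fin a) (Fin b) := by rw [hm']; rfl
  have hn'T : n' = FPAux.nT k (Fin a) (Fin b) := by rw [hn']; rfl
  have hI'A : I' = Ideal.map (FPAux.rL k (Fin a) (Fin b)) I := by rw [hI']; rfl
  have hJ'A : J' = Ideal.map (FPAux.rR k (Fin a) (Fin b)) J := by rw [hJ']; rfl
  have hFsup : F = Ideal.map (FPAux.rL k (Fin a) (Fin b)) I ⊔ Ideal.map (FPAux.rR k (Fin a) (Fin b)) J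
      ⊔ FPAux.mT k (Fin a) (Fin b) * FPAux.nT k (Fin a) (Fin b) := by
    rw [hF, hI'A, hJ'A, hm'T, hn'T, Submodule.add_eq_sup, Submodule.add_eq_sup]
  -- J' is contained in nT, I' is contained in mT
  have hJnT : Ideal.map (FPAux.rR k (Fin a) (Fin b)) J ≤ FPAux.nT k (Fin a) (Fin b) := by
    calc Ideal.map (FPAux.rR k (Fin a) (Fin b)) J
        ≤ Ideal.map (FPAux.rR k (Fin a) (Fin b)) (mxI k (Fin b) ^ 2) := Ideal.map_mono hJn
      _ = FPAux.nT k (Fin a) (Fin b) ^ 2 := by rw [Ideal.map_pow]; rfl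
      _ ≤ FPAux.nT k (Fin a) (Fin b) := by rw [pow_two]; exact Ideal.mul_le_left
  have hImT : Ideal.map (FPAux.rL k (Fin a) (Fin b)) I ≤ FPAux.mT k (Fin a) (Fin b) := by
    calc Ideal.map (FPAux.rL k (Fin a) (Fin b)) I
        ≤ Ideal.map (FPAux.rL k (Fin a) (Fin b)) (mxI k (Fin a) ^ 2) := Ideal.map_mono hIm
      _ = FPAux.mT k (Fin a) (Fin b) ^ 2 := by rw [Ideal.map_pow]; rfl
      _ ≤ FPAux.mT k (Fin a) (Fin b) := by rw [pow_two]; exact Ideal.mul_le_left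
  -- F lies below both contractions
  have hFIle : F ≤ Ideal.comap (FPAux.pL k (Fin a) (Fin b)) I := by
    rw [hFsup, FPAux.comap_pL]
    refine sup_le (sup_le le_sup_left ?_) ?_
    · exact le_trans hJnT le_sup_right
    · exact le_trans (Ideal.mul_le_right : FPAux.mT k (Fin a) (Fin b) * FPAux.nT k (Fin a) (Fin b) ≤ FPAux.nT k (Fin a) (Fin b)) le_sup_right
  have hFJle : F ≤ Ideal.comap (FPAux.pR k (Fin a) (Fin b)) J := by
    rw [hFsup, FPAux.comap_pR]
    refine sup_le (sup_le ?_ le_sup_left) ?_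
    · exact le_trans hImT le_sup_right
    · exact le_trans (Ideal.mul_le_left : FPAux.mT k (Fin a) (Fin b) * FPAux.nT k (Fin a) (Fin b) ≤ FPAux.mT k (Fin a) (Fin b)) le_sup_right
  have hIFle : Ideal.map (FPAux.rL k (Fin a) (Fin b)) I ≤ F := by
    rw [hFsup]; exact le_sup_of_le_left le_sup_left
  have hJFle : Ideal.map (FPAux.rR k (Fin a) (Fin b)) J ≤ F := by
    rw [hFsup]; exact le_sup_of_le_left le_sup_right
  have hmnF : FPAux.mT k (Fin a) (Fin b) * FPAux.nT k (Fin a) (Fin b) ≤ F := by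
    rw [hFsup]; exact le_sup_right
  -- The subset inclusion
  have hsubset : F.minimalPrimes ⊆
      ((fun p => Ideal.map (rename (Sum.inl : Fin a → Fin a ⊕ Fin b) :
          MvPolynomial (Fin a) k →ₐ[k] MvPolynomial (Fin a ⊕ Fin b) k) p + n') ''
        I.minimalPrimes) ∪
      ((fun q => Ideal.map (rename (Sum.inr : Fin b → Fin a ⊕ Fin b) :
          MvPolynomial (Fin b) k →ₐ[k] MvPolynomial (Fin a ⊕ Fin b) k) q + m') ''
        J.minimalPrimes) := by
    intro P hP
    have hmn : FPAux.mT k (Fin a) (Fin b) * FPAux.nT k (Fin a) (Fin b) ≤ P :=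
      le_trans hmnF hP.1.2
    rcases hP.1.1.mul_le.mp hmn with hmP | hnP
    · -- m' ≤ P : right-hand case
      obtain ⟨q, hq, hEq⟩ := FPAux.side_subset (FPAux.pR k (Fin a) (Fin b))
        (FPAux.surj_pR k (Fin a) (Fin b)) (FPAux.mT k (Fin a) (Fin b))
        (FPAux.rR k (Fin a) (Fin b)) (FPAux.comap_pR k (Fin a) (Fin b))
        J F P hFJle hJFle hP hmP
      refine Or.inr ⟨q, hq, ?_⟩
      show Ideal.map (FPAux.rR k (Fin a) (Fin b)) q + m' = P
      rw [hm'T, Submodule.add_eq_sup]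
      exact hEq
    · -- n' ≤ P : left-hand case
      obtain ⟨p, hp, hEq⟩ := FPAux.side_subset (FPAux.pL k (Fin a) (Fin b))
        (FPAux.surj_pL k (Fin a) (Fin b)) (FPAux.nT k (Fin a) (Fin b))
        (FPAux.rL k (Fin a) (Fin b)) (FPAux.comap_pL k (Fin a) (Fin b))
        I F P hFIle hIFle hP hnP
      refine Or.inl ⟨p, hp, ?_⟩
      show Ideal.map (FPAux.rL k (Fin a) (Fin b)) p + n' = P
      rw [hn'T, Submodule.add_eq_sup]
      exact hEq
  refine ⟨hsubset, fun hdI hdJ => ?_⟩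
  refine Set.Subset.antisymm hsubset ?_
  rintro P (⟨p, hp, rfl⟩ | ⟨q, hq, rfl⟩)
  · -- left case : p₁T + n'
    have hgoal : Ideal.map (rename (Sum.inl : Fin a → Fin a ⊕ Fin b) :
        MvPolynomial (Fin a) k →ₐ[k] MvPolynomial (Fin a ⊕ Fin b) k) p + n'
        = Ideal.comap (FPAux.pL k (Fin a) (Fin b)) p := by
      show Ideal.map (FPAux.rL k (Fin a) (Fin b)) p + n'
        = Ideal.comap (FPAux.pL k (Fin a) (Fin b)) p
      rw [hn'T, Submodule.add_eq_sup]
      exact (FPAux.comap_pL k (Fin a) (Fin b) p).symm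
    show Ideal.map (rename (Sum.inl : Fin a → Fin a ⊕ Fin b) :
        MvPolynomial (Fin a) k →ₐ[k] MvPolynomial (Fin a ⊕ Fin b) k) p + n' ∈ F.minimalPrimes
    rw [hgoal]
    apply FPAux.side_mem (FPAux.pL k (Fin a) (Fin b)) (FPAux.surj_pL k (Fin a) (Fin b))
      (FPAux.nT k (Fin a) (Fin b)) (FPAux.ker_pL k (Fin a) (Fin b))
      (FPAux.rL k (Fin a) (Fin b)) (FPAux.comap_pL k (Fin a) (Fin b))
      I p F hFIle hIFle hp
    intro Q hQ hFQ hQle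
    rcases hQ.mul_le.mp (le_trans hmnF hFQ) with hmQ | hnQ
    · exfalso
      have h1 : mxI k (Fin a) ≤ p := by
        calc mxI k (Fin a)
            ≤ Ideal.comap (FPAux.rL k (Fin a) (Fin b)) (FPAux.mT k (Fin a) (Fin b)) :=
              Ideal.le_comap_map
          _ ≤ Ideal.comap (FPAux.rL k (Fin a) (Fin b))
              (Ideal.comap (FPAux.pL k (Fin a) (Fin b)) p) :=
              Ideal.comap_mono (hmQ.trans hQle)
          _ = p := FPAux.comap_rL_pL k (Fin a) (Fin b) p
      have hpm : p = mxI k (Fin a) := FPAux.eq_mxI_of_le p h1 hp.1.1.ne_top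
      have hmmin : mxI k (Fin a) ∈ I.minimalPrimes := hpm ▸ hp
      exact absurd hdI (not_lt_of_ge (FPAux.dim_le_zero_of_mxI_minimal hIhom hmmin))
    · exact hnQ
  · -- right case : p₂T + m'
    have hgoal : Ideal.map (rename (Sum.inr : Fin b → Fin a ⊕ Fin b) :
        MvPolynomial (Fin b) k →ₐ[k] MvPolynomial (Fin a ⊕ Fin b) k) q + m'
        = Ideal.comap (FPAux.pR k (Fin a) (Fin b)) q := by
      show Ideal.map (FPAux.rR k (Fin a) (Fin b)) q + m'
        = Ideal.comap (FPAux.pR k (Fin a) (Fin b)) q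
      rw [hm'T, Submodule.add_eq_sup]
      exact (FPAux.comap_pR k (Fin a) (Fin b) q).symm
    show Ideal.map (rename (Sum.inr : Fin b → Fin a ⊕ Fin b) :
        MvPolynomial (Fin b) k →ₐ[k] MvPolynomial (Fin a ⊕ Fin b) k) q + m' ∈ F.minimalPrimes
    rw [hgoal]
    apply FPAux.side_mem (FPAux.pR k (Fin a) (Fin b)) (FPAux.surj_pR k (Fin a) (Fin b))
      (FPAux.mT k (Fin a) (Fin b)) (FPAux.ker_pR k (Fin a) (Fin b))
      (FPAux.rR k (Fin a) (Fin b)) (FPAux.comap_pR k (Fin a) (Fin b))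
      J q F hFJle hJFle hq
    intro Q hQ hFQ hQle
    rcases hQ.mul_le.mp (le_trans hmnF hFQ) with hmQ | hnQ
    · exact hmQ
    · exfalso
      have h1 : mxI k (Fin b) ≤ q := by
        calc mxI k (Fin b)
            ≤ Ideal.comap (FPAux.rR k (Fin a) (Fin b)) (FPAux.nT k (Fin a) (Fin b)) :=
              Ideal.le_comap_map
          _ ≤ Ideal.comap (FPAux.rR k (Fin a) (Fin b))
              (Ideal.comap (FPAux.pR k (Fin a) (Fin b)) q) :=
              Ideal.comap_mono (hnQ.trans hQle)
          _ = q := FPAux.comap_rR_pR k (Fin a) (Fin b) q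
      have hqm : q = mxI k (Fin b) := FPAux.eq_mxI_of_le q h1 hq.1.1.ne_top
      have hmmin : mxI k (Fin b) ∈ J.minimalPrimes := hqm ▸ hq
      exact absurd hdJ (not_lt_of_ge (FPAux.dim_le_zero_of_mxI_minimal hJhom hmmin))

end
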